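/- Let q(x) = x₁² + x₂² − x₃² with associated bilinear form B(a,b) = a₁b₁ + a₂b₂ − a₃b₃. Let I be an open interval, γ : I → ℝ³ a C² curve with q(γ(s)) = −1 and q(γ'(s)) = 1 for all s ∈ I (a Minkowski-unit-speed curve on the hyperboloid), and Ψ : ℝ³ → ℝ a homogeneous polynomial of degree n. Suppose that for every s ∈ I and every pair of vectors v₋, v₊ ∈ ℝ³ with q(v₋) = q(v₊) = 1, B(v₋, γ(s)) = B(v₊, γ(s)) = 0, and B(v₊, γ'(s)) = B(v₋, γ'(s)), one has Ψ(γ(s) × v₋) = Ψ(γ(s) × v₊). Then the dual curve Γ = γ × γ' satisfies Ψ(Γ(s) − ε·Γ'(s)) = Ψ(Γ(s) + ε·Γ'(s)) for every s ∈ I and every ε ∈ ℝ. -/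

import Mathlib

open MvPolynomial

/-- The standard cross product on `ℝ³`. -/
def cross3 (a b : Fin 3 → ℝ) : Fin 3 → ℝ :=
  ![a 1 * b 2 - a 2 * b 1, a 2 * b 0 - a 0 * b 2, a 0 * b 1 - a 1 * b 0]

/-- The Minkowski bilinear form `B(a,b) = a₁b₁ + a₂b₂ − a₃b₃` on `ℝ³`. -/
def minkB (a b : Fin 3 → ℝ) : ℝ := a 0 * b 0 + a 1 * b 1 - a 2 * b 2

lemma eval_smul_homog {n : ℕ} (Ψ : MvPolynomial (Fin 3) ℝ) (hΨ : Ψ.IsHomogeneous n)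
    (c : ℝ) (x : Fin 3 → ℝ) : eval (c • x) Ψ = c ^ n * eval x Ψ := by
  rw [eval_eq', eval_eq', Finset.mul_sum]
  apply Finset.sum_congr rfl
  intro d hd
  have hdeg : ∑ i, d i = n := by
    have h := hΨ (mem_support_iff.1 hd)
    rw [← h]
    simp [Finsupp.weight_apply, Finsupp.sum]
    exact (Finset.sum_subset (Finset.subset_univ _) (by
      intro i _ hi; simpa using Finsupp.notMem_support_iff.1 hi)).symm
  have : ∏ i, (c • x) i ^ d i = c ^ n * ∏ i, x i ^ d i := by
    simp only [Pi.smul_apply, smul_eq_mul, mul_pow]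
    rw [Finset.prod_mul_distrib, Finset.prod_pow_eq_pow_sum, hdeg]
  rw [this]; ring

lemma cross3_hasDerivAt (f h : ℝ → Fin 3 → ℝ) (f' h' : Fin 3 → ℝ) (s : ℝ)
    (hf : ∀ i, HasDerivAt (fun t => f t i) (f' i) s)
    (hh : ∀ i, HasDerivAt (fun t => h t i) (h' i) s) :
    HasDerivAt (fun t => cross3 (f t) (h t)) (cross3 f' (h s) + cross3 (f s) h') s := by
  apply hasDerivAt_pi.2
  intro i
  fin_cases i <;> simp [cross3] <;>
  [ (convert ((hf 1).mul (hh 2)).sub ((hf 2).mul (hh 1)) using 1; rfl; ring);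
    (convert ((hf 2).mul (hh 0)).sub ((hf 0).mul (hh 2)) using 1; rfl; ring);
    (convert ((hf 0).mul (hh 1)).sub ((hf 1).mul (hh 0)) using 1; rfl; ring)]

lemma minkB_hasDerivAt (f h : ℝ → Fin 3 → ℝ) (f' h' : Fin 3 → ℝ) (s : ℝ)
    (hf : ∀ i, HasDerivAt (fun t => f t i) (f' i) s)
    (hh : ∀ i, HasDerivAt (fun t => h t i) (h' i) s) :
    HasDerivAt (fun t => minkB (f t) (h t)) (minkB f' (h s) + minkB (f s) h') s := by
  simp only [minkB]
  convert (((hf 0).mul (hh 0)).add ((hf 1).mul (hh 1))).sub ((hf 2).mul (hh 2)) using 1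
  rfl
  rfl
  rfl
  ring

/-- hyperbolic case: if a homogeneous polynomial `Ψ` of degree `n`, evaluated
on momenta `M = r × v`, is invariant under the Birkhoff billiard reflection law along a
Minkowski-unit-speed `C²` curve `γ` on the hyperboloid `{q = −1}`, then `Ψ` satisfies the
outer-billiard symmetry identity `Ψ(Γ − εΓ') = Ψ(Γ + εΓ')` along the dual curve
`Γ = γ × γ'`. -/
theorem stmt14 (a b : ℝ) (γ : ℝ → Fin 3 → ℝ)
    (hγ : ContDiffOn ℝ 2 γ (Set.Ioo a b))
    (hhyp : ∀ s ∈ Set.Ioo a b, minkB (γ s) (γ s) = -1)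
    (hspeed : ∀ s ∈ Set.Ioo a b, minkB (deriv γ s) (deriv γ s) = 1)
    (n : ℕ) (Ψ : MvPolynomial (Fin 3) ℝ) (hΨ : Ψ.IsHomogeneous n)
    (hrefl : ∀ s ∈ Set.Ioo a b, ∀ vm vp : Fin 3 → ℝ,
      minkB vm vm = 1 → minkB vp vp = 1 →
      minkB vm (γ s) = 0 → minkB vp (γ s) = 0 →
      minkB vp (deriv γ s) = minkB vm (deriv γ s) →
      eval (cross3 (γ s) vm) Ψ = eval (cross3 (γ s) vp) Ψ) :
    ∀ s ∈ Set.Ioo a b, ∀ ε : ℝ,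
      eval (cross3 (γ s) (deriv γ s)
          - ε • deriv (fun t => cross3 (γ t) (deriv γ t)) s) Ψ
        = eval (cross3 (γ s) (deriv γ s)
            + ε • deriv (fun t => cross3 (γ t) (deriv γ t)) s) Ψ := by
  have hγ1 : ContDiffOn ℝ 1 (deriv γ) (Set.Ioo a b) :=
    hγ.deriv_of_isOpen isOpen_Ioo (by norm_num)
  have hcAt : ∀ u ∈ Set.Ioo a b, ∀ i, HasDerivAt (fun t => γ t i) (deriv γ u i) u := by
    intro u hu i
    have hmem : Set.Ioo a b ∈ nhds u := isOpen_Ioo.mem_nhds hu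
    have hd : HasDerivAt γ (deriv γ u) u :=
      (((hγ.contDiffAt hmem).differentiableAt (by norm_num)).hasDerivAt)
    exact hasDerivAt_pi.1 hd i
  have hcAt' : ∀ u ∈ Set.Ioo a b, ∀ i,
      HasDerivAt (fun t => deriv γ t i) (deriv (deriv γ) u i) u := by
    intro u hu i
    have hmem : Set.Ioo a b ∈ nhds u := isOpen_Ioo.mem_nhds hu
    have hd : HasDerivAt (deriv γ) (deriv (deriv γ) u) u :=
      (((hγ1.contDiffAt hmem).differentiableAt (by norm_num)).hasDerivAt)
    exact hasDerivAt_pi.1 hd i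
  -- B(γ, γ') = 0 on the whole interval
  have orth1 : ∀ u ∈ Set.Ioo a b, minkB (γ u) (deriv γ u) = 0 := by
    intro u hu
    have h1 := minkB_hasDerivAt γ γ (deriv γ u) (deriv γ u) u (hcAt u hu) (hcAt u hu)
    have h2 : HasDerivAt (fun t => minkB (γ t) (γ t)) 0 u := by
      have he : (fun t => minkB (γ t) (γ t)) =ᶠ[nhds u] fun _ => (-1 : ℝ) :=
        Filter.eventuallyEq_of_mem (isOpen_Ioo.mem_nhds hu) hhyp
      exact (hasDerivAt_const u (-1 : ℝ)).congr_of_eventuallyEq he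
    have h0 := h1.unique h2
    have hsymm : minkB (deriv γ u) (γ u) = minkB (γ u) (deriv γ u) := by
      simp only [minkB]; ring
    rw [hsymm] at h0
    linarith
  intro s hs ε
  have hmem : Set.Ioo a b ∈ nhds s := isOpen_Ioo.mem_nhds hs
  set g : Fin 3 → ℝ := γ s with hg
  set g' : Fin 3 → ℝ := deriv γ s with hg'
  set g'' : Fin 3 → ℝ := deriv (deriv γ) s with hg''
  -- B(γ', γ'') = 0 at s
  have orth2 : minkB g' g'' = 0 := by
    have h1 := minkB_hasDerivAt (deriv γ) (deriv γ) g'' g'' s (hcAt' s hs) (hcAt' s hs)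
    have h2 : HasDerivAt (fun t => minkB (deriv γ t) (deriv γ t)) 0 s := by
      have he : (fun t => minkB (deriv γ t) (deriv γ t)) =ᶠ[nhds s] fun _ => (1 : ℝ) :=
        Filter.eventuallyEq_of_mem hmem hspeed
      exact (hasDerivAt_const s (1 : ℝ)).congr_of_eventuallyEq he
    have h0 := h1.unique h2
    have hsymm : minkB g'' (deriv γ s) = minkB g' g'' := by
      rw [← hg']; simp only [minkB]; ring
    rw [hsymm, ← hg'] at h0
    linarith
  -- B(γ, γ'') = -1 at s
  have orth3 : minkB g g'' = -1 := by
    have h1 := minkB_hasDerivAt γ (deriv γ) g' g'' s (hcAt s hs) (hcAt' s hs)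
    have h2 : HasDerivAt (fun t => minkB (γ t) (deriv γ t)) 0 s := by
      have he : (fun t => minkB (γ t) (deriv γ t)) =ᶠ[nhds s] fun _ => (0 : ℝ) :=
        Filter.eventuallyEq_of_mem hmem orth1
      exact (hasDerivAt_const s (0 : ℝ)).congr_of_eventuallyEq he
    have h0 := h1.unique h2
    have hsp := hspeed s hs
    rw [← hg'] at hsp
    have hsymm : minkB g' (deriv γ s) = minkB g' g' := by rw [← hg']
    rw [hsymm, ← hg] at h0
    rw [hsp] at h0
    linarith
  -- derivative of the dual curve
  have hF : HasDerivAt (fun t => cross3 (γ t) (deriv γ t)) (cross3 g' g' + cross3 g g'') s :=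
    cross3_hasDerivAt γ (deriv γ) g' g'' s (hcAt s hs) (hcAt' s hs)
  have hzero : cross3 g' g' = (0 : Fin 3 → ℝ) := by
    funext i; fin_cases i <;> simp [cross3] <;> ring
  rw [hzero, zero_add] at hF
  have hd2 : deriv (fun t => cross3 (γ t) (deriv γ t)) s = cross3 g g'' := hF.deriv
  -- scalar facts
  have hA : minkB g' g' = 1 := by rw [hg']; exact hspeed s hs
  have hB0 : minkB g g' = 0 := by rw [hg, hg']; exact orth1 s hs
  have hGG : minkB g g = -1 := by rw [hg]; exact hhyp s hs
  -- the normal direction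
  set w : Fin 3 → ℝ := fun i => g'' i - g i with hw
  have hwgg : w 0 * g 0 + w 1 * g 1 - w 2 * g 2 = 0 := by
    simp only [hw]
    simp only [minkB] at orth3 hGG
    linarith
  have hwg' : g' 0 * w 0 + g' 1 * w 1 - g' 2 * w 2 = 0 := by
    simp only [hw]
    simp only [minkB] at orth2 hB0
    linarith
  set K : ℝ := minkB w w with hK
  have hKc : w 0 * w 0 + w 1 * w 1 - w 2 * w 2 = K := by rw [hK]; rfl
  have hKnn : 0 ≤ K := by
    have hg2 := hGG
    simp only [minkB] at hg2
    have hid : (w 0 * w 0 + w 1 * w 1 - w 2 * w 2) * (g 2 * g 2)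
        = (w 0 * g 1 - w 1 * g 0) ^ 2 + w 0 ^ 2 + w 1 ^ 2 := by
      linear_combination (w 0 * g 0 + w 1 * g 1 + w 2 * g 2) * hwgg
        - (w 0 ^ 2 + w 1 ^ 2) * hg2
    rw [← hKc]
    nlinarith [hid, sq_nonneg (w 0 * g 1 - w 1 * g 0), sq_nonneg (w 0), sq_nonneg (w 1),
      sq_nonneg (g 0), sq_nonneg (g 1)]
  have hpos : 0 < 1 + ε ^ 2 * K := by positivity
  obtain ⟨c, hcpos, hc2⟩ : ∃ c : ℝ, 0 < c ∧ c ^ 2 * (1 + ε ^ 2 * K) = 1 := by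
    refine ⟨(Real.sqrt (1 + ε ^ 2 * K))⁻¹, inv_pos.2 (Real.sqrt_pos.2 hpos), ?_⟩
    rw [← Real.sqrt_inv, Real.sq_sqrt (by positivity)]
    field_simp
  -- the reflected pair
  set vm : Fin 3 → ℝ := fun i => c * g' i + (c * ε) * w i with hvm
  set vp : Fin 3 → ℝ := fun i => c * g' i - (c * ε) * w i with hvp
  have hA' := hA; have hB0' := hB0
  simp only [minkB] at hA' hB0'
  have hm1 : minkB vm vm = 1 := by
    simp only [minkB, hvm]
    linear_combination (c ^ 2) * hA' + (2 * c ^ 2 * ε) * hwg' + (c ^ 2 * ε ^ 2) * hKc + hc2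
  have hp1 : minkB vp vp = 1 := by
    simp only [minkB, hvp]
    linear_combination (c ^ 2) * hA' - (2 * c ^ 2 * ε) * hwg' + (c ^ 2 * ε ^ 2) * hKc + hc2
  have hmg : minkB vm g = 0 := by
    simp only [minkB, hvm]
    linear_combination c * hB0' + (c * ε) * hwgg
  have hpg : minkB vp g = 0 := by
    simp only [minkB, hvp]
    linear_combination c * hB0' - (c * ε) * hwgg
  have htan : minkB vp g' = minkB vm g' := by
    simp only [minkB, hvp, hvm]
    linear_combination (-2 * c * ε) * hwg'
  have hkey := hrefl s hs vm vp hm1 hp1 hmg hpg htan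
  -- identify the two momenta
  have e1 : cross3 g vm = c • (cross3 g g' + ε • cross3 g g'') := by
    funext i
    fin_cases i <;> simp [cross3, hvm, hw] <;> ring
  have e2 : cross3 g vp = c • (cross3 g g' - ε • cross3 g g'') := by
    funext i
    fin_cases i <;> simp [cross3, hvp, hw] <;> ring
  rw [← hg] at hkey
  rw [e1, e2, eval_smul_homog Ψ hΨ, eval_smul_homog Ψ hΨ] at hkey
  rw [hd2]
  have hcn : (c : ℝ) ^ n ≠ 0 := pow_ne_zero _ (ne_of_gt hcpos)
  exact (mul_left_cancel₀ hcn hkey).symm
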